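/- Let (ν, P, P̃, U) ∈ K_d, let θ̃ be a nonzero complex number, θ = ν/θ̃, fix a positive integer N, and define x̃_k = θ̃ ∑_{j=0}^{d} p̃_j u_{k,j} x_j for k = 0,...,d. Then for all n, m ∈ I: ⟨x̃^n, x̃^m⟩ = δ_{n,m} θ̃^N n!/p^n, where x̃^n = ∏_{k=0}^d x̃_k^{n_k} and p^n = ∏_{i=0}^d p_i^{n_i}. -/

import Mathlib

open Matrix Finset MvPolynomial

/-- The bilinear form on polynomials determined by
`⟨x^n, x^m⟩ = δ_{n,m} θ^N n! / p̃^n`. -/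
noncomputable def bform (d N : ℕ) (θ : ℂ) (pt : Fin (d+1) → ℂ)
    (f g : MvPolynomial (Fin (d+1)) ℂ) : ℂ :=
  ∑ n ∈ f.support,
    f.coeff n * g.coeff n * θ ^ N * (∏ i, ((n i).factorial : ℂ)) / ∏ i, pt i ^ n i

namespace StmtAux

variable {d N : ℕ} {θ : ℂ} {pt : Fin (d+1) → ℂ}
variable {f f' g g' : MvPolynomial (Fin (d+1)) ℂ}

lemma bform_eq_sum (S : Finset (Fin (d+1) →₀ ℕ)) (hS : f.support ⊆ S) :
    bform d N θ pt f g = ∑ n ∈ S,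
      f.coeff n * g.coeff n * θ ^ N * (∏ i, ((n i).factorial : ℂ)) / ∏ i, pt i ^ n i := by
  refine Finset.sum_subset hS fun n _ hn => ?_
  rw [MvPolynomial.notMem_support_iff] at hn
  simp [hn]

lemma bform_zero_left : bform d N θ pt 0 g = 0 := by simp [bform]

lemma bform_add_left : bform d N θ pt (f + f') g = bform d N θ pt f g + bform d N θ pt f' g := by
  rw [bform_eq_sum (f.support ∪ f'.support)
      MvPolynomial.support_add,
    bform_eq_sum (f.support ∪ f'.support) Finset.subset_union_left,
    bform_eq_sum (f.support ∪ f'.support) Finset.subset_union_right,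
    ← Finset.sum_add_distrib]
  refine Finset.sum_congr rfl fun n _ => ?_
  rw [MvPolynomial.coeff_add]; ring

lemma bform_C_mul_left (c : ℂ) : bform d N θ pt (C c * f) g = c * bform d N θ pt f g := by
  have hsub : (C c * f).support ⊆ f.support := by
    rw [← MvPolynomial.smul_eq_C_mul]
    exact MvPolynomial.support_smul
  rw [bform_eq_sum f.support hsub, bform, Finset.mul_sum]
  refine Finset.sum_congr rfl fun n _ => ?_
  rw [MvPolynomial.coeff_C_mul]; ring

lemma bform_sum_left {ι : Type*} (s : Finset ι) (h : ι → MvPolynomial (Fin (d+1)) ℂ) :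
    bform d N θ pt (∑ j ∈ s, h j) g = ∑ j ∈ s, bform d N θ pt (h j) g := by
  classical
  induction s using Finset.induction_on with
  | empty => simpa using bform_zero_left
  | insert _ _ hne ih =>
    rw [Finset.sum_insert hne, Finset.sum_insert hne, bform_add_left, ih]

lemma bform_zero_right : bform d N θ pt f 0 = 0 := by simp [bform]

lemma bform_add_right : bform d N θ pt f (g + g') = bform d N θ pt f g + bform d N θ pt f g' := by
  unfold bform
  rw [← Finset.sum_add_distrib]
  refine Finset.sum_congr rfl fun n _ => ?_
  rw [MvPolynomial.coeff_add]; ring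

lemma bform_C_mul_right (c : ℂ) : bform d N θ pt f (C c * g) = c * bform d N θ pt f g := by
  unfold bform
  rw [Finset.mul_sum]
  refine Finset.sum_congr rfl fun n _ => ?_
  rw [MvPolynomial.coeff_C_mul]; ring

lemma bform_sum_right {ι : Type*} (s : Finset ι) (h : ι → MvPolynomial (Fin (d+1)) ℂ) :
    bform d N θ pt f (∑ j ∈ s, h j) = ∑ j ∈ s, bform d N θ pt f (h j) := by
  classical
  induction s using Finset.induction_on with
  | empty => simpa using bform_zero_right
  | insert _ _ hne ih =>
    rw [Finset.sum_insert hne, Finset.sum_insert hne, bform_add_right, ih]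

lemma coeff_pderiv (i : Fin (d+1)) (g : MvPolynomial (Fin (d+1)) ℂ) (mm : Fin (d+1) →₀ ℕ) :
    MvPolynomial.coeff mm (MvPolynomial.pderiv i g)
      = ((mm i : ℕ) + 1 : ℂ) * MvPolynomial.coeff (mm + Finsupp.single i 1) g := by
  induction g using MvPolynomial.induction_on' with
  | add f g hf hg => simp [hf, hg]; ring
  | monomial s a =>
    rw [MvPolynomial.pderiv_monomial, MvPolynomial.coeff_monomial,
      MvPolynomial.coeff_monomial]
    by_cases h : s = mm + Finsupp.single i 1
    · subst h
      have h1 : mm + Finsupp.single i 1 - Finsupp.single i 1 = mm := by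
        ext l; simp [Finsupp.single_apply]
      have h2 : (mm + Finsupp.single i 1 : Fin (d+1) →₀ ℕ) i = mm i + 1 := by
        simp
      rw [if_pos h1, if_pos rfl, h2]
      push_cast; ring
    · rw [if_neg h]
      by_cases h' : s - Finsupp.single i 1 = mm
      · rw [if_pos h']
        have hsi : s i = 0 := by
          by_contra hsi
          apply h
          ext l
          have h3 := DFunLike.congr_fun h' l
          rw [Finsupp.tsub_apply] at h3
          rw [Finsupp.add_apply]
          simp only [Finsupp.single_apply] at h3 ⊢
          rcases eq_or_ne i l with rfl | hne
          · simp at h3 ⊢; omega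
          · simp [hne] at h3 ⊢; omega
        simp [hsi]
      · rw [if_neg h']; ring

lemma prod_split {β : Type*} [CommMonoid β] (h : Fin (d+1) → β) (k : Fin (d+1)) :
    ∏ l, h l = h k * ∏ l ∈ Finset.univ.erase k, h l :=
  (Finset.mul_prod_erase Finset.univ h (Finset.mem_univ k)).symm

lemma bform_X_mul (hpt : ∀ j, pt j ≠ 0) (i : Fin (d+1)) :
    bform d (N+1) θ pt (X i * f) g = (θ / pt i) * bform d N θ pt f (MvPolynomial.pderiv i g) := by
  unfold bform
  rw [MvPolynomial.support_X_mul, Finset.sum_map, Finset.mul_sum]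
  refine Finset.sum_congr rfl fun mm _ => ?_
  simp only [addLeftEmbedding_apply]
  rw [MvPolynomial.coeff_X_mul, coeff_pderiv]
  have key : ∀ l : Fin (d+1), (Finsupp.single i 1 + mm : Fin (d+1) →₀ ℕ) l
      = (if l = i then 1 else 0) + mm l := by
    intro l
    rw [Finsupp.add_apply, Finsupp.single_apply]
    simp [eq_comm]
  have h1 : (∏ l, (((Finsupp.single i 1 + mm : Fin (d+1) →₀ ℕ) l).factorial : ℂ))
      = ((mm i : ℕ) + 1 : ℂ) * ∏ l, ((mm l).factorial : ℂ) := by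
    rw [prod_split (fun l => (((Finsupp.single i 1 + mm : Fin (d+1) →₀ ℕ) l).factorial : ℂ)) i,
      prod_split (fun l => ((mm l).factorial : ℂ)) i]
    have : ∏ l ∈ Finset.univ.erase i, (((Finsupp.single i 1 + mm : Fin (d+1) →₀ ℕ) l).factorial : ℂ)
        = ∏ l ∈ Finset.univ.erase i, ((mm l).factorial : ℂ) := by
      refine Finset.prod_congr rfl fun l hl => ?_
      rw [key l, if_neg (Finset.mem_erase.mp hl).1, zero_add]
    rw [this, key i, if_pos rfl, Nat.add_comm 1 (mm i), Nat.factorial_succ]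
    push_cast; ring
  have h2 : (∏ l, pt l ^ ((Finsupp.single i 1 + mm : Fin (d+1) →₀ ℕ) l)) = pt i * ∏ l, pt l ^ (mm l) := by
    rw [prod_split (fun l => pt l ^ ((Finsupp.single i 1 + mm : Fin (d+1) →₀ ℕ) l)) i,
      prod_split (fun l => pt l ^ (mm l)) i]
    have : ∏ l ∈ Finset.univ.erase i, pt l ^ ((Finsupp.single i 1 + mm : Fin (d+1) →₀ ℕ) l)
        = ∏ l ∈ Finset.univ.erase i, pt l ^ (mm l) := by
      refine Finset.prod_congr rfl fun l hl => ?_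
      rw [key l, if_neg (Finset.mem_erase.mp hl).1, zero_add]
    rw [this, key i, if_pos rfl, Nat.add_comm 1 (mm i), pow_succ]
    ring
  rw [h1, h2]
  have hcomm : mm + Finsupp.single i 1 = Finsupp.single i 1 + mm := add_comm _ _
  rw [hcomm]
  have hP : (∏ l, pt l ^ (mm l)) ≠ 0 :=
    Finset.prod_ne_zero_iff.mpr fun l _ => pow_ne_zero _ (hpt l)
  field_simp [hpt i]
  ring

section Main

variable {d : ℕ} {ν θ θt : ℂ} {p pt : Fin (d+1) → ℂ}
variable {U : Matrix (Fin (d+1)) (Fin (d+1)) ℂ}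
variable {xt : Fin (d+1) → MvPolynomial (Fin (d+1)) ℂ}

/-- The weighted derivative operator. -/
noncomputable def Dop (d : ℕ) (ν : ℂ) (U : Matrix (Fin (d+1)) (Fin (d+1)) ℂ) (k : Fin (d+1))
    (g : MvPolynomial (Fin (d+1)) ℂ) : MvPolynomial (Fin (d+1)) ℂ :=
  ∑ j, C (ν * U k j) * MvPolynomial.pderiv j g

lemma Dop_one (k : Fin (d+1)) : Dop d ν U k 1 = 0 := by
  simp [Dop]

lemma Dop_mul (k : Fin (d+1)) (g h : MvPolynomial (Fin (d+1)) ℂ) :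
    Dop d ν U k (g * h) = Dop d ν U k g * h + g * Dop d ν U k h := by
  simp only [Dop, MvPolynomial.pderiv_mul]
  rw [Finset.sum_mul, Finset.mul_sum, ← Finset.sum_add_distrib]
  exact Finset.sum_congr rfl fun j _ => by ring

lemma Dop_pow (k : Fin (d+1)) (g : MvPolynomial (Fin (d+1)) ℂ) (s : ℕ) :
    Dop d ν U k (g ^ s) = C (s : ℂ) * g ^ (s - 1) * Dop d ν U k g := by
  induction s with
  | zero => simp [Dop_one]
  | succ s ih =>
    rcases Nat.eq_zero_or_pos s with rfl | hs
    · simp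
    · have hgs : g ^ (s - 1) * g = g ^ s := by
        rw [← pow_succ, show s - 1 + 1 = s from by omega]
      rw [pow_succ, Dop_mul, ih, Nat.add_sub_cancel]
      push_cast
      rw [map_add, MvPolynomial.C_1]
      calc C (s : ℂ) * g ^ (s - 1) * Dop d ν U k g * g + g ^ s * Dop d ν U k g
          = C (s : ℂ) * (g ^ (s - 1) * g) * Dop d ν U k g + g ^ s * Dop d ν U k g := by ring
        _ = (C (s : ℂ) + 1) * g ^ s * Dop d ν U k g := by rw [hgs]; ring

lemma Dop_prod (k : Fin (d+1)) (s : Finset (Fin (d+1)))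
    (h : Fin (d+1) → MvPolynomial (Fin (d+1)) ℂ) :
    Dop d ν U k (∏ l ∈ s, h l)
      = ∑ l ∈ s, (∏ l' ∈ s.erase l, h l') * Dop d ν U k (h l) := by
  classical
  induction s using Finset.induction_on with
  | empty => simp [Dop_one]
  | @insert a s ha ih =>
    rw [Finset.prod_insert ha, Dop_mul, ih, Finset.sum_insert ha, Finset.erase_insert ha,
      Finset.mul_sum]
    rw [mul_comm (Dop d ν U k (h a)) _]
    congr 1
    refine Finset.sum_congr rfl fun l hl => ?_
    have hla : a ≠ l := fun hh => ha (hh ▸ hl)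
    rw [Finset.erase_insert_of_ne hla,
      Finset.prod_insert (fun hc => ha (Finset.mem_of_mem_erase hc))]
    ring

lemma Dop_xt (hν : ν ≠ 0) (hθt : θt ≠ 0)
    (hxt : ∀ k, xt k = C θt * ∑ j, C (pt j * U k j) * X j)
    (hent : ∀ k l, ∑ j, U k j * pt j * U l j = if k = l then 1 / (ν * p k) else 0)
    (k l : Fin (d+1)) :
    Dop d ν U k (xt l) = C (if k = l then θt / p k else 0) := by
  have hder : ∀ j, MvPolynomial.pderiv j (xt l) = C (θt * (pt j * U l j)) := by
    intro j
    rw [hxt l, MvPolynomial.pderiv_C_mul, map_sum]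
    have : ∀ i, MvPolynomial.pderiv j (C (pt i * U l i) * X i)
        = C (pt i * U l i) * (if i = j then 1 else 0) := by
      intro i
      rw [MvPolynomial.pderiv_C_mul, MvPolynomial.pderiv_X]
      by_cases h : i = j
      · subst h; simp [Pi.single_apply]
      · simp [Pi.single_apply, Ne.symm h, h]
    rw [Finset.sum_congr rfl fun i _ => this i]
    simp only [mul_ite, mul_one, mul_zero]
    rw [Finset.sum_ite_eq' Finset.univ j (fun i => C (pt i * U l i)),
      if_pos (Finset.mem_univ j), ← C_mul]
  unfold Dop
  rw [Finset.sum_congr rfl fun j _ => by rw [hder j]]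
  have : ∀ j : Fin (d+1), (C (ν * U k j) * C (θt * (pt j * U l j)) : MvPolynomial (Fin (d+1)) ℂ)
      = C ((ν * θt) * (U k j * pt j * U l j)) := by
    intro j; rw [← C_mul]; congr 1; ring
  rw [Finset.sum_congr rfl fun j _ => this j, ← map_sum, ← Finset.mul_sum, hent k l]
  congr 1
  by_cases h : k = l
  · rw [if_pos h, if_pos h]
    rw [mul_one_div, mul_div_mul_left _ _ hν]
  · rw [if_neg h, if_neg h, mul_zero]

lemma Dop_xt_prod (hν : ν ≠ 0) (hθt : θt ≠ 0)
    (hxt : ∀ k, xt k = C θt * ∑ j, C (pt j * U k j) * X j)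
    (hent : ∀ k l, ∑ j, U k j * pt j * U l j = if k = l then 1 / (ν * p k) else 0)
    (m : Fin (d+1) → ℕ) (k : Fin (d+1)) :
    Dop d ν U k (∏ l, xt l ^ m l)
      = C ((m k : ℂ) * (θt / p k)) * ∏ l, xt l ^ (m l - if l = k then 1 else 0) := by
  rw [Dop_prod]
  rw [Finset.sum_eq_single k]
  · rw [Dop_pow, Dop_xt hν hθt hxt hent k k, if_pos rfl]
    rw [prod_split (fun l => xt l ^ (m l - if l = k then 1 else 0)) k, if_pos rfl]
    have : ∏ l ∈ Finset.univ.erase k, xt l ^ (m l - if l = k then 1 else 0)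
        = ∏ l ∈ Finset.univ.erase k, xt l ^ m l := by
      refine Finset.prod_congr rfl fun l hl => ?_
      rw [if_neg (Finset.mem_erase.mp hl).1, Nat.sub_zero]
    rw [this, MvPolynomial.C_mul]
    ring
  · intro l _ hlk
    rw [Dop_pow, Dop_xt hν hθt hxt hent k l, if_neg (Ne.symm hlk), map_zero, mul_zero, mul_zero]
  · intro h; exact absurd (Finset.mem_univ k) h

lemma bform_xt_mul {N : ℕ} (hν : ν ≠ 0) (hθt : θt ≠ 0) (hθ : θ = ν / θt)
    (hpt : ∀ j, pt j ≠ 0)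
    (hxt : ∀ k, xt k = C θt * ∑ j, C (pt j * U k j) * X j)
    (k : Fin (d+1)) (f g : MvPolynomial (Fin (d+1)) ℂ) :
    bform d (N+1) θ pt (xt k * f) g = bform d N θ pt f (Dop d ν U k g) := by
  rw [hxt k, mul_assoc, bform_C_mul_left, Finset.sum_mul, bform_sum_left]
  unfold Dop
  rw [bform_sum_right, Finset.mul_sum]
  refine Finset.sum_congr rfl fun j _ => ?_
  rw [mul_assoc, bform_C_mul_left, bform_X_mul hpt, bform_C_mul_right, hθ]
  field_simp [hpt j]

lemma key_induction (hν : ν ≠ 0) (hθt : θt ≠ 0) (hθ : θ = ν / θt)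
    (hp : ∀ i, p i ≠ 0) (hpt : ∀ j, pt j ≠ 0)
    (hxt : ∀ k, xt k = C θt * ∑ j, C (pt j * U k j) * X j)
    (hent : ∀ k l, ∑ j, U k j * pt j * U l j = if k = l then 1 / (ν * p k) else 0) :
    ∀ (N : ℕ) (n m : Fin (d+1) → ℕ), ∑ i, n i = N → ∑ i, m i = N →
    bform d N θ pt (∏ k, xt k ^ n k) (∏ k, xt k ^ m k)
      = if n = m then θt ^ N * (∏ i, ((n i).factorial : ℂ)) / ∏ i, p i ^ n i
        else 0 := by
  intro N
  induction N with
  | zero =>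
    intro n m hn hm
    have hn0 : ∀ i, n i = 0 := fun i =>
      (Finset.sum_eq_zero_iff.mp hn) i (Finset.mem_univ i)
    have hm0 : ∀ i, m i = 0 := fun i =>
      (Finset.sum_eq_zero_iff.mp hm) i (Finset.mem_univ i)
    have hnm : n = m := funext fun i => by rw [hn0 i, hm0 i]
    rw [if_pos hnm]
    have h1 : (∏ k, xt k ^ n k) = 1 := by
      rw [Finset.prod_congr rfl fun k _ => by rw [hn0 k, pow_zero]]; exact Finset.prod_const_one
    have h2 : (∏ k, xt k ^ m k) = 1 := by
      rw [Finset.prod_congr rfl fun k _ => by rw [hm0 k, pow_zero]]; exact Finset.prod_const_one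
    rw [h1, h2]
    have hsupp : (1 : MvPolynomial (Fin (d+1)) ℂ).support ⊆ {0} := by
      intro x hx
      rw [MvPolynomial.mem_support_iff] at hx
      rw [Finset.mem_singleton]
      by_contra hx0
      exact hx (by rw [MvPolynomial.coeff_one, if_neg fun hc => hx0 hc.symm])
    rw [bform_eq_sum {0} hsupp, Finset.sum_singleton]
    simp [hn0]
  | succ N ih =>
    intro n m hn hm
    have hex : ∃ k, n k ≠ 0 := by
      by_contra hc
      push_neg at hc
      rw [Finset.sum_congr rfl fun i _ => hc i, Finset.sum_const_zero] at hn
      exact Nat.succ_ne_zero N hn.symm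
    obtain ⟨k, hk⟩ := hex
    set n' : Fin (d+1) → ℕ := fun l => n l - if l = k then 1 else 0 with hn'def
    set m' : Fin (d+1) → ℕ := fun l => m l - if l = k then 1 else 0 with hm'def
    have hn'k : n' k = n k - 1 := by simp [hn'def]
    have hn'l : ∀ l, l ≠ k → n' l = n l := fun l hl => by simp [hn'def, hl]
    have hm'k : m' k = m k - 1 := by simp [hm'def]
    have hm'l : ∀ l, l ≠ k → m' l = m l := fun l hl => by simp [hm'def, hl]
    have hsplit : (∏ l, xt l ^ n l) = xt k * ∏ l, xt l ^ n' l := by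
      rw [prod_split (fun l => xt l ^ n l) k, prod_split (fun l => xt l ^ n' l) k]
      have hE : ∏ l ∈ Finset.univ.erase k, xt l ^ n' l
          = ∏ l ∈ Finset.univ.erase k, xt l ^ n l := by
        refine Finset.prod_congr rfl fun l hl => ?_
        rw [hn'l l (Finset.mem_erase.mp hl).1]
      rw [hE]
      have : xt k ^ n k = xt k * xt k ^ n' k := by
        rw [hn'k]
        obtain ⟨t, ht⟩ : ∃ t, n k = t + 1 := ⟨n k - 1, by omega⟩
        rw [ht, pow_succ', Nat.add_sub_cancel]
      rw [this, mul_assoc]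
    rw [hsplit, bform_xt_mul hν hθt hθ hpt hxt,
      Dop_xt_prod hν hθt hxt hent, bform_C_mul_right]
    by_cases hmk : m k = 0
    · have hne : n ≠ m := fun h => hk (by rw [h]; exact hmk)
      rw [if_neg hne, hmk]
      simp
    · have hsum1 : (∑ l, (if l = k then 1 else 0 : ℕ)) = 1 := by
        rw [Finset.sum_ite_eq' Finset.univ k (fun _ => 1), if_pos (Finset.mem_univ k)]
      have hnn : ∑ i, n' i = N := by
        have : ∑ i, n i = ∑ i, (n' i + if i = k then 1 else 0) := by
          refine Finset.sum_congr rfl fun i _ => ?_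
          by_cases hik : i = k
          · subst hik; rw [hn'k, if_pos rfl]; omega
          · rw [hn'l i hik, if_neg hik]; omega
        rw [this, Finset.sum_add_distrib, hsum1] at hn
        omega
      have hmm : ∑ i, m' i = N := by
        have : ∑ i, m i = ∑ i, (m' i + if i = k then 1 else 0) := by
          refine Finset.sum_congr rfl fun i _ => ?_
          by_cases hik : i = k
          · subst hik; rw [hm'k, if_pos rfl]; omega
          · rw [hm'l i hik, if_neg hik]; omega
        rw [this, Finset.sum_add_distrib, hsum1] at hm
        omega
      rw [ih n' m' hnn hmm]
      have hiff : (n' = m') ↔ (n = m) := by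
        constructor
        · intro h
          funext l
          have h1 := congrFun h l
          by_cases hlk : l = k
          · subst hlk; rw [hn'k, hm'k] at h1; omega
          · rw [hn'l l hlk, hm'l l hlk] at h1; exact h1
        · intro h
          funext l
          have h2 := congrFun h l
          by_cases hlk : l = k
          · subst hlk; rw [hn'k, hm'k]; omega
          · rw [hn'l l hlk, hm'l l hlk]; omega
      by_cases hnm : n = m
      · rw [if_pos hnm, if_pos (hiff.mpr hnm)]
        have hmkn : m k = n k := by rw [hnm]
        have hF : (∏ i, ((n i).factorial : ℂ))
            = (n k : ℂ) * ∏ i, ((n' i).factorial : ℂ) := by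
          rw [prod_split (fun i => ((n i).factorial : ℂ)) k,
            prod_split (fun i => ((n' i).factorial : ℂ)) k]
          have hE : ∏ l ∈ Finset.univ.erase k, ((n' l).factorial : ℂ)
              = ∏ l ∈ Finset.univ.erase k, ((n l).factorial : ℂ) := by
            refine Finset.prod_congr rfl fun l hl => ?_
            rw [hn'l l (Finset.mem_erase.mp hl).1]
          rw [hE]
          have : (n k).factorial = n k * (n' k).factorial := by
            rw [hn'k]
            obtain ⟨t, ht⟩ : ∃ t, n k = t + 1 := ⟨n k - 1, by omega⟩
            rw [ht, Nat.factorial_succ, Nat.add_sub_cancel]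
          rw [this]
          push_cast
          ring
        have hP : (∏ i, p i ^ n i) = p k * ∏ i, p i ^ n' i := by
          rw [prod_split (fun i => p i ^ n i) k, prod_split (fun i => p i ^ n' i) k]
          have hE : ∏ l ∈ Finset.univ.erase k, p l ^ n' l
              = ∏ l ∈ Finset.univ.erase k, p l ^ n l := by
            refine Finset.prod_congr rfl fun l hl => ?_
            rw [hn'l l (Finset.mem_erase.mp hl).1]
          rw [hE]
          have : p k ^ n k = p k * p k ^ n' k := by
            rw [hn'k]
            obtain ⟨t, ht⟩ : ∃ t, n k = t + 1 := ⟨n k - 1, by omega⟩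
            rw [ht, pow_succ', Nat.add_sub_cancel]
          rw [this, mul_assoc]
        rw [hF, hP, hmkn]
        have hP' : (∏ i, p i ^ n' i) ≠ 0 :=
          Finset.prod_ne_zero_iff.mpr fun i _ => pow_ne_zero _ (hp i)
        field_simp [hp k]
        ring
      · rw [if_neg hnm, if_neg (fun h => hnm (hiff.mp h)), mul_zero]

end Main

end StmtAux

theorem stmt_8 (d : ℕ) (hd : 1 ≤ d) (ν : ℂ) (hν : ν ≠ 0)
    (p pt : Fin (d+1) → ℂ) (U : Matrix (Fin (d+1)) (Fin (d+1)) ℂ)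
    (hp0 : p 0 = 1/ν) (hpt0 : pt 0 = 1/ν)
    (hU : ∀ j, U 0 j = 1 ∧ U j 0 = 1)
    (hK : ν • (Matrix.diagonal p * U * Matrix.diagonal pt * U.transpose) = 1)
    (θt : ℂ) (hθt : θt ≠ 0) (θ : ℂ) (hθ : θ = ν / θt)
    (N : ℕ) (hN : 1 ≤ N)
    (xt : Fin (d+1) → MvPolynomial (Fin (d+1)) ℂ)
    (hxt : ∀ k, xt k = C θt * ∑ j, C (pt j * U k j) * X j)
    (n m : Fin (d+1) → ℕ) (hn : ∑ i, n i = N) (hm : ∑ i, m i = N) :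
    bform d N θ pt (∏ k, xt k ^ n k) (∏ k, xt k ^ m k)
      = if n = m then θt ^ N * (∏ i, ((n i).factorial : ℂ)) / ∏ i, p i ^ n i
        else 0 := by
  have hdet := congrArg Matrix.det hK
  rw [Matrix.det_smul, Matrix.det_one, Matrix.det_mul, Matrix.det_mul, Matrix.det_mul,
    Matrix.det_diagonal, Matrix.det_diagonal, Matrix.det_transpose] at hdet
  have hpprod : (∏ i, p i) ≠ 0 := by
    intro h0; rw [h0] at hdet; simp at hdet
  have hptprod : (∏ i, pt i) ≠ 0 := by
    intro h0; rw [h0] at hdet; simp at hdet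
  have hp : ∀ i, p i ≠ 0 := fun i hi => hpprod (Finset.prod_eq_zero (Finset.mem_univ i) hi)
  have hpt : ∀ j, pt j ≠ 0 := fun j hj => hptprod (Finset.prod_eq_zero (Finset.mem_univ j) hj)
  have hent : ∀ k l, ∑ j, U k j * pt j * U l j = if k = l then 1 / (ν * p k) else 0 := by
    intro k l
    have hKe : (ν • (Matrix.diagonal p * U * Matrix.diagonal pt * U.transpose)) k l
        = (1 : Matrix (Fin (d+1)) (Fin (d+1)) ℂ) k l := by rw [hK]
    rw [Matrix.smul_apply, Matrix.one_apply, Matrix.mul_apply] at hKe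
    simp only [Matrix.mul_diagonal, Matrix.diagonal_mul, Matrix.transpose_apply,
      smul_eq_mul] at hKe
    have hS : (∑ j, p k * U k j * pt j * U l j)
        = p k * ∑ j, U k j * pt j * U l j := by
      rw [Finset.mul_sum]; exact Finset.sum_congr rfl fun j _ => by ring
    rw [hS] at hKe
    by_cases h : k = l
    · rw [if_pos h] at hKe
      rw [if_pos h, eq_div_iff (mul_ne_zero hν (hp k))]
      linear_combination hKe
    · rw [if_neg h] at hKe
      rw [if_neg h]
      exact ((mul_eq_zero.mp ((mul_eq_zero.mp hKe).resolve_left hν)).resolve_left (hp k))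
  exact StmtAux.key_induction hν hθt hθ hp hpt hxt hent N n m hn hm
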